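/- Let H be a complex Hilbert space, 𝒱 and 𝒲 closed subspaces with H = 𝒱 ⊕ 𝒲ᗮ, P = π_{𝒱,𝒲ᗮ}, and ε ≥ 0. Let (W,w) be a fusion frame for 𝒲 with synthesis operator T_W, and let L : K_W → H be a bounded operator with ‖L T_W* − P‖ ≤ ε. For each i ∈ I let D_i : W_i → W_i be a bounded operator with ‖D_i g − g‖ ≤ ε_i ‖g‖ for all g ∈ W_i, where ε_i ≥ 0, sup_{i∈I} ‖D_i‖ < ∞, and Σ_{i∈I} w_i² ε_i² < ∞. Then for every f ∈ H the family (w_i D_i(π_{W_i} f))_{i∈I} belongs to K_W and ‖L((w_i D_i(π_{W_i} f))_{i∈I}) − P f‖ ≤ (‖L‖ (Σ_{i∈I} w_i² ε_i²)^{1/2} + ε) ‖f‖. -/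

import Mathlib

open scoped ENNReal InnerProductSpace
set_option synthInstance.maxHeartbeats 1000000
set_option maxHeartbeats 1000000
noncomputable section

/-- Perturbation of local reconstruction: if `‖L T_W* − P‖ ≤ ε` and the local operators
`D_i : W_i → W_i` satisfy `‖D_i g − g‖ ≤ ε_i ‖g‖` with `sup_i ‖D_i‖ < ∞` and
`Σ w_i² ε_i² < ∞`, then for every `f` the family `(w_i D_i (π_{W_i} f))_i` lies in `K_W` and
`‖L((w_i D_i(π_{W_i} f))_i) − P f‖ ≤ (‖L‖ (Σ w_i² ε_i²)^{1/2} + ε) ‖f‖`. -/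
theorem approx_dual_local_perturbation
    {H : Type*} [NormedAddCommGroup H] [InnerProductSpace ℂ H] [CompleteSpace H]
    {I : Type*} [Countable I]
    (𝒱 𝒲 : Submodule ℂ H) [CompleteSpace 𝒱] [CompleteSpace 𝒲]
    (P : H →L[ℂ] H) (hPidem : P ∘L P = P)
    (hPran : LinearMap.range (P : H →ₗ[ℂ] H) = 𝒱) (hPker : LinearMap.ker (P : H →ₗ[ℂ] H) = 𝒲ᗮ)
    (ε : ℝ) (hε : 0 ≤ ε)
    (W : I → Submodule ℂ H) [∀ i, CompleteSpace (W i)] (hW : ∀ i, W i ≤ 𝒲)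
    (w : I → ℝ) (hw : ∀ i, 0 < w i)
    (TW : lp (fun i => W i) 2 →L[ℂ] H)
    (hTW : ∀ g : lp (fun i => W i) 2, HasSum (fun i => (w i : ℂ) • (g i : H)) (TW g))
    (hWfr : LinearMap.range (TW : lp (fun i => W i) 2 →ₗ[ℂ] H) = 𝒲)
    (L : lp (fun i => W i) 2 →L[ℂ] H)
    (hLapprox : ‖L ∘L ContinuousLinearMap.adjoint TW - P‖ ≤ ε)
    (D : ∀ i, W i →L[ℂ] W i) (εl : I → ℝ) (hεl : ∀ i, 0 ≤ εl i)
    (hD : ∀ i (g : W i), ‖D i g - g‖ ≤ εl i * ‖g‖)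
    (hDbdd : BddAbove (Set.range fun i => ‖D i‖))
    (hsum : Summable fun i => w i ^ 2 * εl i ^ 2) :
    ∀ f : H,
      ∃ hmem : Memℓp (fun i => (w i : ℂ) • D i (Submodule.orthogonalProjectionOnto (W i) f)) 2,
        ‖L (⟨fun i => (w i : ℂ) • D i (Submodule.orthogonalProjectionOnto (W i) f), hmem⟩ :
            lp (fun i => W i) 2) - P f‖ ≤
          (‖L‖ * Real.sqrt (∑' i, w i ^ 2 * εl i ^ 2) + ε) * ‖f‖ := by
  classical
  intro f
  set A : lp (fun i => W i) 2 := ContinuousLinearMap.adjoint TW f with hAdef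
  -- identify the components of the analysis operator
  have hA : ∀ i, A i = (w i : ℂ) • Submodule.orthogonalProjectionOnto (W i) f := by
    intro i
    apply ext_inner_left ℂ
    intro g
    have h1 : ⟪g, A i⟫_ℂ = ⟪lp.single 2 i g, A⟫_ℂ := (lp.inner_single_left i g A).symm
    have hTWs : TW (lp.single 2 i g) = (w i : ℂ) • (g : H) := by
      refine (hTW _).unique ?_
      convert hasSum_ite_eq i ((w i : ℂ) • (g : H)) using 1
      ext j
      rw [lp.single_apply]
      split_ifs with h
      · subst h; simp
      · simp [Pi.single_eq_of_ne h]
    rw [h1, hAdef, ContinuousLinearMap.adjoint_inner_right, hTWs, inner_smul_left,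
      inner_smul_right, Submodule.inner_orthogonalProjectionOnto_eq_of_mem_left]
    congr 1
    simp [Complex.conj_ofReal]
  -- the error family
  set e : ∀ i, W i := fun i =>
    (w i : ℂ) • (D i (Submodule.orthogonalProjectionOnto (W i) f) - Submodule.orthogonalProjectionOnto (W i) f) with hedef
  have hbound : ∀ i, ‖e i‖ ≤ w i * εl i * ‖f‖ := by
    intro i
    have h1 : ‖e i‖ = w i * ‖D i (Submodule.orthogonalProjectionOnto (W i) f) -
        Submodule.orthogonalProjectionOnto (W i) f‖ := by
      rw [hedef]
      simp [norm_smul, Complex.norm_real, abs_of_pos (hw i)]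
    have h2 : ‖(Submodule.orthogonalProjectionOnto (W i) f : W i)‖ ≤ ‖f‖ := by
      have := (Submodule.orthogonalProjectionOnto (W i)).le_opNorm f
      have h3 := Submodule.orthogonalProjectionOnto_norm_le (W i)
      nlinarith [norm_nonneg f]
    calc ‖e i‖ = w i * ‖D i (Submodule.orthogonalProjectionOnto (W i) f) -
        Submodule.orthogonalProjectionOnto (W i) f‖ := h1
      _ ≤ w i * (εl i * ‖Submodule.orthogonalProjectionOnto (W i) f‖) := by
          exact mul_le_mul_of_nonneg_left (hD i _) (hw i).le
      _ ≤ w i * (εl i * ‖f‖) := by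
          exact mul_le_mul_of_nonneg_left (mul_le_mul_of_nonneg_left h2 (hεl i)) (hw i).le
      _ = w i * εl i * ‖f‖ := by ring
  have hbsum : Summable fun i => w i ^ 2 * εl i ^ 2 * ‖f‖ ^ 2 := hsum.mul_right _
  have hesum : Summable fun i => ‖e i‖ ^ ((2 : ℝ≥0∞).toReal) := by
    refine Summable.of_nonneg_of_le (fun i => ?_) (fun i => ?_) hbsum
    · positivity
    · have : ‖e i‖ ^ ((2 : ℝ≥0∞).toReal) = ‖e i‖ ^ (2 : ℕ) := by
        rw [show ((2 : ℝ≥0∞).toReal) = ((2 : ℕ) : ℝ) by norm_num, Real.rpow_natCast]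
      rw [this]
      calc ‖e i‖ ^ 2 ≤ (w i * εl i * ‖f‖) ^ 2 := by
            exact pow_le_pow_left₀ (norm_nonneg _) (hbound i) 2
        _ = w i ^ 2 * εl i ^ 2 * ‖f‖ ^ 2 := by ring
  have he2 : Memℓp e 2 := memℓp_gen hesum
  have hmem : Memℓp (fun i => (w i : ℂ) • D i (Submodule.orthogonalProjectionOnto (W i) f)) 2 := by
    have h := (lp.memℓp A).add he2
    have hfun : (⇑A + e) = fun i => (w i : ℂ) • D i (Submodule.orthogonalProjectionOnto (W i) f) := by
      funext i
      simp only [Pi.add_apply, hA i, hedef]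
      rw [smul_sub]
      abel
    rwa [hfun] at h
  refine ⟨hmem, ?_⟩
  set E : lp (fun i => W i) 2 := ⟨e, he2⟩ with hEdef
  have hXE : (⟨fun i => (w i : ℂ) • D i (Submodule.orthogonalProjectionOnto (W i) f), hmem⟩ :
      lp (fun i => W i) 2) = A + E := by
    apply Subtype.ext
    funext i
    simp only [lp.coeFn_add, Pi.add_apply, hA i]
    show (w i : ℂ) • D i (Submodule.orthogonalProjectionOnto (W i) f) = _ + e i
    rw [hedef]
    simp only [smul_sub]
    abel
  -- norm of the error
  have hS : 0 ≤ ∑' i, w i ^ 2 * εl i ^ 2 := tsum_nonneg fun i => by positivity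
  have hEnorm : ‖E‖ ≤ Real.sqrt (∑' i, w i ^ 2 * εl i ^ 2) * ‖f‖ := by
    refine lp.norm_le_of_tsum_le (by norm_num) (by positivity) ?_
    have hC : (Real.sqrt (∑' i, w i ^ 2 * εl i ^ 2) * ‖f‖) ^ ((2 : ℝ≥0∞).toReal) =
        (∑' i, w i ^ 2 * εl i ^ 2) * ‖f‖ ^ 2 := by
      rw [show ((2 : ℝ≥0∞).toReal) = ((2 : ℕ) : ℝ) by norm_num, Real.rpow_natCast]
      rw [mul_pow, Real.sq_sqrt hS]
    rw [hC]
    have := Summable.tsum_le_tsum (f := fun i => ‖E i‖ ^ ((2 : ℝ≥0∞).toReal))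
      (g := fun i => w i ^ 2 * εl i ^ 2 * ‖f‖ ^ 2) ?_ hesum hbsum
    · calc ∑' i, ‖E i‖ ^ ((2 : ℝ≥0∞).toReal)
          ≤ ∑' i, w i ^ 2 * εl i ^ 2 * ‖f‖ ^ 2 := this
        _ = (∑' i, w i ^ 2 * εl i ^ 2) * ‖f‖ ^ 2 := tsum_mul_right
    · intro i
      show ‖E i‖ ^ ((2 : ℝ≥0∞).toReal) ≤ w i ^ 2 * εl i ^ 2 * ‖f‖ ^ 2
      calc ‖E i‖ ^ ((2 : ℝ≥0∞).toReal) = ‖e i‖ ^ (2 : ℕ) := by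
            rw [show ((2 : ℝ≥0∞).toReal) = ((2 : ℕ) : ℝ) by norm_num, Real.rpow_natCast]
        _ ≤ (w i * εl i * ‖f‖) ^ 2 :=
            pow_le_pow_left₀ (norm_nonneg _) (hbound i) 2
        _ = w i ^ 2 * εl i ^ 2 * ‖f‖ ^ 2 := by ring
  -- final estimate
  have hsplit : L (A + E) - P f = ((L ∘L ContinuousLinearMap.adjoint TW - P) f) + L E := by
    simp only [ContinuousLinearMap.sub_apply, ContinuousLinearMap.comp_apply, map_add, hAdef]
    abel
  rw [hXE, hsplit]
  calc ‖((L ∘L ContinuousLinearMap.adjoint TW - P) f) + L E‖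
      ≤ ‖(L ∘L ContinuousLinearMap.adjoint TW - P) f‖ + ‖L E‖ := norm_add_le _ _
    _ ≤ ε * ‖f‖ + ‖L‖ * ‖E‖ := by
        gcongr
        · calc ‖(L ∘L ContinuousLinearMap.adjoint TW - P) f‖
              ≤ ‖L ∘L ContinuousLinearMap.adjoint TW - P‖ * ‖f‖ :=
                ContinuousLinearMap.le_opNorm _ _
            _ ≤ ε * ‖f‖ := mul_le_mul_of_nonneg_right hLapprox (norm_nonneg f)
        · exact ContinuousLinearMap.le_opNorm _ _
    _ ≤ ε * ‖f‖ + ‖L‖ * (Real.sqrt (∑' i, w i ^ 2 * εl i ^ 2) * ‖f‖) := by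
        gcongr
    _ = (‖L‖ * Real.sqrt (∑' i, w i ^ 2 * εl i ^ 2) + ε) * ‖f‖ := by ring
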